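/- Let κ be an inaccessible cardinal, and suppose that for every set A ⊆ V_κ there is a cardinal α < κ that is extendible below κ for A. Then κ is a Vopěnka cardinal. -/

import Mathlib

open FirstOrder

universe u

/-- The relations of the standard language `L_std`: one binary relation symbol `ε` and one
unary relation symbol `R`. -/
inductive LStdRel : ℕ → Type
  | eps : LStdRel 2
  | r : LStdRel 1

/-- The standard first-order language `L_std`, with one binary relation symbol `ε` and one
unary relation symbol `R`. -/
def LStd : FirstOrder.Language := ⟨fun _ => Empty, LStdRel⟩

/-- The `L_std`-structure coded by the ZFC sets `M` (the domain), `E` (a binary relation on `M`,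
coded as a set of Kuratowski pairs) and `R` (a unary relation, coded as a subset of `M`). -/
def codedStructure (M E R : ZFSet.{u}) : LStd.Structure ↥M.toSet where
  funMap := fun f _ => f.elim
  RelMap
    | .eps, x => ZFSet.pair (x 0).1 (x 1).1 ∈ E
    | .r, x => (x 0).1 ∈ R

/-- The ZFC set `S` codes an `L_std`-structure: it is a triple `⟨M, E, R⟩` with `E` a binary
relation on `M` and `R` a unary relation on `M`. -/
def IsLStdCode (S : ZFSet.{u}) : Prop :=
  ∃ M E R : ZFSet.{u}, S = M.pair (E.pair R) ∧
    (∀ p ∈ E, ∃ a ∈ M, ∃ b ∈ M, p = a.pair b) ∧ R ⊆ M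

/-- The ZFC set `S` codes an ordinal `L_std`-structure: an `L_std`-structure whose domain is a
(von Neumann) ordinal. -/
def IsOrdinalLStdCode (S : ZFSet.{u}) : Prop :=
  ∃ M E R : ZFSet.{u}, S = M.pair (E.pair R) ∧ M.IsOrdinal ∧
    (∀ p ∈ E, ∃ a ∈ M, ∃ b ∈ M, p = a.pair b) ∧ R ⊆ M

/-- There is an `L_std`-elementary embedding from the structure coded by `S` into the structure
coded by `T`. -/
def ElemEmbeddable (S T : ZFSet.{u}) : Prop :=
  ∃ M E R N E' R' : ZFSet.{u}, S = M.pair (E.pair R) ∧ T = N.pair (E'.pair R') ∧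
    letI := codedStructure M E R
    letI := codedStructure N E' R'
    Nonempty (↥M.toSet ↪ₑ[LStd] ↥N.toSet)

/-- `VP A`: there are distinct members `M ≠ N` of the set `A` such that there is an
`L_std`-elementary embedding from `M` into `N`. -/
def VP (A : ZFSet.{u}) : Prop :=
  ∃ M ∈ A, ∃ N ∈ A, M ≠ N ∧ ElemEmbeddable M N

/-- `κ` is a Vopěnka cardinal: `κ` is inaccessible, and for every set `A ⊆ V_κ` of cardinality
`κ` all of whose elements are `L_std`-structures, `VP A` holds. -/
def IsVopenka (κ : Cardinal.{u}) : Prop :=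
  κ.IsInaccessible ∧
    ∀ A : ZFSet.{u}, (∀ x ∈ A, x.rank < κ.ord) →
      Cardinal.mk ↥A.toSet = Cardinal.lift.{u + 1} κ →
      (∀ x ∈ A, IsLStdCode x) → VP A

/-- The structure `⟨V_η, ∈, A ∩ V_η⟩`: the domain consists of the sets of rank `< η`, with `ε`
interpreted as membership and `R` interpreted as membership in the class `A`. -/
def VStructure (η : Ordinal.{u}) (A : Set ZFSet.{u}) :
    LStd.Structure {x : ZFSet.{u} // x.rank < η} where
  funMap := fun f _ => f.elim
  RelMap
    | .eps, x => (x 0).1 ∈ (x 1).1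
    | .r, x => (x 0).1 ∈ A

/-- The ZFC set `α` is a (von Neumann) cardinal: it is an ordinal and every one of its elements
has strictly smaller cardinality. -/
def ZFIsCardinal (α : ZFSet.{u}) : Prop :=
  α.IsOrdinal ∧ ∀ β ∈ α, Cardinal.mk ↥β.toSet < Cardinal.mk ↥α.toSet

/-- For von Neumann ordinals `α`, `η`, `ζ` and a class `A`: there is an elementary embedding
`j : ⟨V_η, ∈, A ∩ V_η⟩ → ⟨V_ζ, ∈, A ∩ V_ζ⟩` with critical point `α` (i.e. `j` fixes every
ordinal `β < α` and moves `α`) such that `j α > η`. -/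
def ExtWitness (A : Set ZFSet.{u}) (α η ζ : ZFSet.{u}) : Prop :=
  letI := VStructure η.rank A
  letI := VStructure ζ.rank A
  ∃ j : {x : ZFSet.{u} // x.rank < η.rank} ↪ₑ[LStd] {x : ZFSet.{u} // x.rank < ζ.rank},
    (∀ (β : ZFSet.{u}) (hβ : β.rank < η.rank), β ∈ α → (j ⟨β, hβ⟩).1 = β) ∧
    ∀ hα : α.rank < η.rank, (j ⟨α, hα⟩).1 ≠ α ∧ η ∈ (j ⟨α, hα⟩).1

/-- `α` is `η`-extendible below `κ` for `A`: there are `ζ < κ` and an elementary embedding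
`j : ⟨V_η, ∈, A ∩ V_η⟩ → ⟨V_ζ, ∈, A ∩ V_ζ⟩` with critical point `α` and `j α > η`. -/
def EtaExtendibleBelow (κ : Cardinal.{u}) (A : Set ZFSet.{u}) (α η : ZFSet.{u}) : Prop :=
  ∃ ζ : ZFSet.{u}, ζ.IsOrdinal ∧ ζ.rank < κ.ord ∧ ExtWitness A α η ζ

/-- `α` is extendible below `κ` for `A`: it is `η`-extendible below `κ` for `A` for every
ordinal `η` with `α < η < κ`. -/
def ExtendibleBelow (κ : Cardinal.{u}) (A : Set ZFSet.{u}) (α : ZFSet.{u}) : Prop :=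
  ∀ η : ZFSet.{u}, η.IsOrdinal → α ∈ η → η.rank < κ.ord → EtaExtendibleBelow κ A α η

theorem ZFSet.mem_toSet (a u : ZFSet.{u}) : a ∈ u.toSet ↔ a ∈ u := Iff.rfl

universe v

namespace VopenkaAux
open FirstOrder.Language

open ZFSet Ordinal in
noncomputable def vN : Ordinal.{u} → ZFSet.{u} := fun β =>
  ZFSet.range fun i : β.ToType => vN ((Ordinal.ToType.mk (o := β)).symm i).1
termination_by β => β
decreasing_by exact Set.mem_Iio.mp (Subtype.prop _)

lemma mem_vN {x : ZFSet.{u}} {β : Ordinal.{u}} : x ∈ vN β ↔ ∃ γ < β, x = vN γ := by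
  rw [show vN β = ZFSet.range fun i : β.ToType => vN ((Ordinal.ToType.mk (o := β)).symm i).1 from by rw [vN], ZFSet.mem_range]
  constructor
  · rintro ⟨i, rfl⟩
    exact ⟨_, ((Ordinal.ToType.mk (o := β)).symm i).2, rfl⟩
  · rintro ⟨γ, hγ, rfl⟩
    exact ⟨Ordinal.ToType.mk (o := β) ⟨γ, hγ⟩, by simp⟩

lemma vN_mem_vN {γ β : Ordinal.{u}} (h : γ < β) : vN γ ∈ vN β :=
  mem_vN.2 ⟨γ, h, rfl⟩

lemma rank_vN (β : Ordinal.{u}) : (vN β).rank = β := by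
  induction β using Ordinal.induction with
  | h β IH =>
    apply le_antisymm
    · rw [ZFSet.rank_le_iff]
      intro y hy
      obtain ⟨γ, hγ, rfl⟩ := mem_vN.1 hy
      rw [IH γ hγ]; exact hγ
    · refine le_of_forall_lt fun γ hγ => ?_
      calc γ = (vN γ).rank := (IH γ hγ).symm
      _ < _ := ZFSet.rank_lt_of_mem (vN_mem_vN hγ)

lemma vN_isOrdinal (β : Ordinal.{u}) : (vN β).IsOrdinal := by
  constructor
  · intro y hy z hz
    obtain ⟨γ, hγ, rfl⟩ := mem_vN.1 hy
    obtain ⟨δ, hδ, rfl⟩ := mem_vN.1 hz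
    exact vN_mem_vN (hδ.trans hγ)
  · intro y z w hyz hzw hw
    obtain ⟨γ, hγ, rfl⟩ := mem_vN.1 hw
    obtain ⟨δ, hδ, rfl⟩ := mem_vN.1 hzw
    obtain ⟨ε, hε, rfl⟩ := mem_vN.1 hyz
    exact vN_mem_vN (hε.trans hδ)

lemma IsOrdinal.mem_isOrdinal {x y : ZFSet.{u}} (hx : x.IsOrdinal) (hy : y ∈ x) :
    y.IsOrdinal := by
  constructor
  · intro z hz w hw
    exact hx.mem_trans' hw hz hy
  · intro a b c hab hbc hcy
    exact hx.mem_trans' hab hbc (hx.isTransitive.mem_trans hcy hy)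

lemma isOrdinal_eq_vN : ∀ {x : ZFSet.{u}}, x.IsOrdinal → x = vN x.rank := by
  intro x
  induction x using WellFounded.induction (hwf := ZFSet.mem_wf) with
  | _ x IH =>
  intro hx
  apply ZFSet.ext
  intro y
  constructor
  · intro hy
    have hyo := IsOrdinal.mem_isOrdinal hx hy
    exact mem_vN.2 ⟨y.rank, ZFSet.rank_lt_of_mem hy, IH y hy hyo⟩
  · intro hy
    obtain ⟨γ, hγ, rfl⟩ := mem_vN.1 hy
    obtain ⟨z, hz, hγz⟩ := ZFSet.lt_rank_iff.1 hγ
    have hzo := IsOrdinal.mem_isOrdinal hx hz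
    rcases eq_or_lt_of_le hγz with h | h
    · rw [h, ← IH z hz hzo]; exact hz
    · have h2 : vN γ ∈ z := by
        rw [IH z hz hzo]
        exact vN_mem_vN h
      exact hx.isTransitive.mem_trans h2 hz


lemma isRegular_lift {κ : Cardinal.{u}} (h : κ.IsRegular) :
    (Cardinal.lift.{v} κ).IsRegular := by
  constructor
  · exact Cardinal.aleph0_le_lift.mpr h.1
  · rw [← Cardinal.lift_ord, ← Ordinal.lift_cof]
    exact Cardinal.lift_le.2 h.2

lemma card_ball_lt {κ : Cardinal.{u}} (hκ : κ.IsInaccessible) :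
    ∀ β < κ.ord, Cardinal.mk {x : ZFSet.{u} // x.rank < β} < Cardinal.lift.{u + 1} κ := by
  intro β
  induction β using Ordinal.induction with
  | h β IH =>
    intro hβ
    have hreg : (Cardinal.lift.{u + 1} κ).IsRegular := isRegular_lift hκ.isRegular
    have e := Equiv.sigmaFiberEquiv
      (fun x : {x : ZFSet.{u} // x.rank < β} => (⟨x.1.rank, x.2⟩ : Set.Iio β))
    rw [← Cardinal.mk_congr e, Cardinal.mk_sigma]
    apply Cardinal.sum_lt_of_isRegular hreg
    · rw [Ordinal.mk_Iio_ordinal]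
      exact Cardinal.lift_lt.2 (Cardinal.lt_ord.1 hβ)
    · rintro ⟨γ, hγ⟩
      have hfib : Cardinal.mk {a : {x : ZFSet.{u} // x.rank < β} //
            (fun x : {x : ZFSet.{u} // x.rank < β} => (⟨x.1.rank, x.2⟩ : Set.Iio β)) a
              = ⟨γ, hγ⟩}
          ≤ Cardinal.mk (Set {y : ZFSet.{u} // y.rank < γ}) := by
        apply Cardinal.mk_le_of_injective (f := fun a => {y | y.1 ∈ a.1.1})
        rintro ⟨⟨x₁, hx₁⟩, hx₂⟩ ⟨⟨y₁, hy₁⟩, hy₂⟩ h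
        have hx₂' : x₁.rank = γ := congrArg Subtype.val hx₂
        have hy₂' : y₁.rank = γ := congrArg Subtype.val hy₂
        simp only [Subtype.mk.injEq]
        apply ZFSet.ext
        intro z
        constructor
        · intro hz
          exact (Set.ext_iff.1 h ⟨z, (ZFSet.rank_lt_of_mem hz).trans_eq hx₂'⟩).1 hz
        · intro hz
          exact (Set.ext_iff.1 h ⟨z, (ZFSet.rank_lt_of_mem hz).trans_eq hy₂'⟩).2 hz
      refine hfib.trans_lt ?_
      rw [Cardinal.mk_set]
      obtain ⟨c₀, hc₀lt, hc₀eq⟩ := Cardinal.lt_lift_iff.1 (IH γ hγ (hγ.trans hβ))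
      rw [← hc₀eq]
      calc (2 : Cardinal.{u+1}) ^ Cardinal.lift.{u+1} c₀
          = Cardinal.lift.{u+1} (2 ^ c₀) := by rw [Cardinal.lift_power, Cardinal.lift_ofNat]
        _ < Cardinal.lift.{u+1} κ := Cardinal.lift_lt.2 (hκ.isStrongPrelimit hc₀lt)


abbrev SV (θ : Ordinal.{u}) := {x : ZFSet.{u} // x.rank < θ}

abbrev eps2 : LStd.Relations 2 := LStdRel.eps
abbrev r1 : LStd.Relations 1 := LStdRel.r

variable {θ ζ' : Ordinal.{u}} {𝒜 : Set ZFSet.{u}}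

/-- Realization in the `V`-structure. -/
abbrev VReal (θ : Ordinal.{u}) (𝒜 : Set ZFSet.{u}) {α : Type} {n : ℕ}
    (φ : LStd.BoundedFormula α n) (v : α → SV θ) (w : Fin n → SV θ) : Prop :=
  @BoundedFormula.Realize LStd (SV θ) (VStructure θ 𝒜) α n φ v w

lemma relMap_eps (x : Fin 2 → SV θ) :
    @Structure.RelMap LStd (SV θ) (VStructure θ 𝒜) 2 eps2 x ↔ (x 0).1 ∈ (x 1).1 := Iff.rfl

lemma relMap_r (x : Fin 1 → SV θ) :
    @Structure.RelMap LStd (SV θ) (VStructure θ 𝒜) 1 r1 x ↔ (x 0).1 ∈ 𝒜 := Iff.rfl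


lemma realize_rel' {M : Type*} [LStd.Structure M] {α : Type} {n k : ℕ}
    {R : LStd.Relations k} {ts : Fin k → LStd.Term (α ⊕ Fin n)} {v : α → M} {xs : Fin n → M} :
    (BoundedFormula.rel R ts).Realize v xs ↔
      Structure.RelMap R fun i => Term.realize (Sum.elim v xs) (ts i) := Iff.rfl

def memF : LStd.Formula (Fin 2) :=
  BoundedFormula.rel eps2 ![Term.var (Sum.inl 0), Term.var (Sum.inl 1)]

def rF : LStd.Formula (Fin 1) :=
  BoundedFormula.rel r1 ![Term.var (Sum.inl 0)]

def singF : LStd.Formula (Fin 2) :=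
  BoundedFormula.all
    ((BoundedFormula.rel eps2 ![Term.var (Sum.inr 0), Term.var (Sum.inl 1)]).iff
      (Term.bdEqual (Term.var (Sum.inr 0)) (Term.var (Sum.inl 0))))

def doubF : LStd.Formula (Fin 3) :=
  BoundedFormula.all
    ((BoundedFormula.rel eps2 ![Term.var (Sum.inr 0), Term.var (Sum.inl 2)]).iff
      ((Term.bdEqual (Term.var (Sum.inr 0)) (Term.var (Sum.inl 0))) ⊔
        (Term.bdEqual (Term.var (Sum.inr 0)) (Term.var (Sum.inl 1)))))

def transF : LStd.Formula (Fin 1) :=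
  BoundedFormula.all (BoundedFormula.all
    ((BoundedFormula.rel eps2 ![Term.var (Sum.inr 1), Term.var (Sum.inr 0)]).imp
      ((BoundedFormula.rel eps2 ![Term.var (Sum.inr 0), Term.var (Sum.inl 0)]).imp
        (BoundedFormula.rel eps2 ![Term.var (Sum.inr 1), Term.var (Sum.inl 0)]))))

def pairMemF : LStd.Formula (Fin 3) :=
  BoundedFormula.ex
    ((BoundedFormula.rel eps2 ![Term.var (Sum.inr 0), Term.var (Sum.inl 2)]) ⊓
      (BoundedFormula.all
        ((BoundedFormula.rel eps2 ![Term.var (Sum.inr 1), Term.var (Sum.inr 0)]).iff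
          ((BoundedFormula.all
            ((BoundedFormula.rel eps2 ![Term.var (Sum.inr 2), Term.var (Sum.inr 1)]).iff
              (Term.bdEqual (Term.var (Sum.inr 2)) (Term.var (Sum.inl 0))))) ⊔
          (BoundedFormula.all
            ((BoundedFormula.rel eps2 ![Term.var (Sum.inr 2), Term.var (Sum.inr 1)]).iff
              ((Term.bdEqual (Term.var (Sum.inr 2)) (Term.var (Sum.inl 0))) ⊔
                (Term.bdEqual (Term.var (Sum.inr 2)) (Term.var (Sum.inl 1))))))))))

lemma realize_memF (v : Fin 2 → SV θ) :
    VReal θ 𝒜 memF v default ↔ (v 0).1 ∈ (v 1).1 := by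
  simp [VReal, memF, realize_rel', relMap_eps]

lemma realize_rF (v : Fin 1 → SV θ) :
    VReal θ 𝒜 rF v default ↔ (v 0).1 ∈ 𝒜 := by
  simp [VReal, rF, realize_rel', relMap_r]

lemma realize_singF (v : Fin 2 → SV θ) :
    VReal θ 𝒜 singF v default ↔ (v 1).1 = {(v 0).1} := by
  have : VReal θ 𝒜 singF v default ↔ ∀ r : SV θ, (r.1 ∈ (v 1).1 ↔ r = v 0) := by
    simp [VReal, singF, BoundedFormula.realize_all, BoundedFormula.realize_iff,
      realize_rel', relMap_eps, BoundedFormula.realize_bdEqual, Fin.snoc]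
  rw [this]
  constructor
  · intro H
    apply ZFSet.ext
    intro z
    rw [ZFSet.mem_singleton]
    constructor
    · intro hz
      have := (H ⟨z, (ZFSet.rank_lt_of_mem hz).trans (v 1).2⟩).1 hz
      exact congrArg Subtype.val this
    · rintro rfl
      exact (H (v 0)).2 rfl
  · intro H r
    rw [H, ZFSet.mem_singleton]
    exact ⟨fun h => Subtype.ext h, fun h => congrArg Subtype.val h⟩

lemma realize_doubF (v : Fin 3 → SV θ) :
    VReal θ 𝒜 doubF v default ↔ (v 2).1 = {(v 0).1, (v 1).1} := by
  have : VReal θ 𝒜 doubF v default ↔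
      ∀ r : SV θ, (r.1 ∈ (v 2).1 ↔ (r = v 0 ∨ r = v 1)) := by
    simp [VReal, doubF, BoundedFormula.realize_all, BoundedFormula.realize_iff,
      BoundedFormula.realize_sup, realize_rel', relMap_eps,
      BoundedFormula.realize_bdEqual, Fin.snoc]
  rw [this]
  constructor
  · intro H
    apply ZFSet.ext
    intro z
    rw [ZFSet.mem_pair]
    constructor
    · intro hz
      rcases (H ⟨z, (ZFSet.rank_lt_of_mem hz).trans (v 2).2⟩).1 hz with h | h
      · exact Or.inl (congrArg Subtype.val h)
      · exact Or.inr (congrArg Subtype.val h)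
    · rintro (rfl | rfl)
      · exact (H (v 0)).2 (Or.inl rfl)
      · exact (H (v 1)).2 (Or.inr rfl)
  · intro H r
    rw [H, ZFSet.mem_pair]
    constructor
    · rintro (h | h)
      · exact Or.inl (Subtype.ext h)
      · exact Or.inr (Subtype.ext h)
    · rintro (rfl | rfl)
      · exact Or.inl rfl
      · exact Or.inr rfl

lemma realize_transF (v : Fin 1 → SV θ) :
    VReal θ 𝒜 transF v default ↔ ∀ y z : ZFSet.{u}, z ∈ y → y ∈ (v 0).1 → z ∈ (v 0).1 := by
  have : VReal θ 𝒜 transF v default ↔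
      ∀ q r : SV θ, r.1 ∈ q.1 → q.1 ∈ (v 0).1 → r.1 ∈ (v 0).1 := by
    simp [VReal, transF, BoundedFormula.realize_all, BoundedFormula.realize_imp,
      realize_rel', relMap_eps, Fin.snoc]
  rw [this]
  constructor
  · intro H y z hzy hy
    exact H ⟨y, (ZFSet.rank_lt_of_mem hy).trans (v 0).2⟩
      ⟨z, (ZFSet.rank_lt_of_mem hzy).trans ((ZFSet.rank_lt_of_mem hy).trans (v 0).2)⟩ hzy hy
  · intro H q r h1 h2
    exact H q.1 r.1 h1 h2

lemma realize_pairMemF (v : Fin 3 → SV θ)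
    (hsa : ZFSet.rank {(v 0).1} < θ) (hsab : ZFSet.rank {(v 0).1, (v 1).1} < θ) :
    VReal θ 𝒜 pairMemF v default ↔ ZFSet.pair (v 0).1 (v 1).1 ∈ (v 2).1 := by
  have : VReal θ 𝒜 pairMemF v default ↔
      ∃ p : SV θ, p.1 ∈ (v 2).1 ∧ ∀ q : SV θ, (q.1 ∈ p.1 ↔
        ((∀ r : SV θ, r.1 ∈ q.1 ↔ r = v 0) ∨
          (∀ r : SV θ, r.1 ∈ q.1 ↔ (r = v 0 ∨ r = v 1)))) := by
    simp [VReal, pairMemF, BoundedFormula.realize_ex, BoundedFormula.realize_inf,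
      BoundedFormula.realize_all, BoundedFormula.realize_iff, BoundedFormula.realize_sup,
      realize_rel', relMap_eps, BoundedFormula.realize_bdEqual, Fin.snoc]
  rw [this]
  have sing_iff : ∀ q x : SV θ, (∀ r : SV θ, r.1 ∈ q.1 ↔ r = x) ↔ q.1 = {x.1} := by
    intro q x
    constructor
    · intro H
      apply ZFSet.ext
      intro z
      rw [ZFSet.mem_singleton]
      constructor
      · intro hz
        exact congrArg Subtype.val ((H ⟨z, (ZFSet.rank_lt_of_mem hz).trans q.2⟩).1 hz)
      · rintro rfl
        exact (H x).2 rfl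
    · intro H r
      rw [H, ZFSet.mem_singleton]
      exact ⟨fun h => Subtype.ext h, fun h => congrArg Subtype.val h⟩
  have doub_iff : ∀ q x y : SV θ, (∀ r : SV θ, r.1 ∈ q.1 ↔ (r = x ∨ r = y)) ↔
      q.1 = {x.1, y.1} := by
    intro q x y
    constructor
    · intro H
      apply ZFSet.ext
      intro z
      rw [ZFSet.mem_pair]
      constructor
      · intro hz
        rcases (H ⟨z, (ZFSet.rank_lt_of_mem hz).trans q.2⟩).1 hz with h | h
        · exact Or.inl (congrArg Subtype.val h)
        · exact Or.inr (congrArg Subtype.val h)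
      · rintro (rfl | rfl)
        · exact (H x).2 (Or.inl rfl)
        · exact (H y).2 (Or.inr rfl)
    · intro H r
      rw [H, ZFSet.mem_pair]
      constructor
      · rintro (h | h)
        · exact Or.inl (Subtype.ext h)
        · exact Or.inr (Subtype.ext h)
      · rintro (rfl | rfl)
        · exact Or.inl rfl
        · exact Or.inr rfl
  constructor
  · rintro ⟨p, hpE, H⟩
    have : p.1 = ZFSet.pair (v 0).1 (v 1).1 := by
      apply ZFSet.ext
      intro z
      rw [show ZFSet.pair (v 0).1 (v 1).1 = {{(v 0).1}, {(v 0).1, (v 1).1}} from rfl,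
        ZFSet.mem_pair]
      constructor
      · intro hz
        have := (H ⟨z, (ZFSet.rank_lt_of_mem hz).trans p.2⟩).1 hz
        rcases this with h | h
        · exact Or.inl ((sing_iff _ _).1 h)
        · exact Or.inr ((doub_iff _ _ _).1 h)
      · rintro (rfl | rfl)
        · exact (H ⟨{(v 0).1}, hsa⟩).2 (Or.inl ((sing_iff _ _).2 rfl))
        · exact (H ⟨{(v 0).1, (v 1).1}, hsab⟩).2 (Or.inr ((doub_iff _ _ _).2 rfl))
    rwa [this] at hpE
  · intro hp
    refine ⟨⟨ZFSet.pair (v 0).1 (v 1).1, (ZFSet.rank_lt_of_mem hp).trans (v 2).2⟩, hp, ?_⟩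
    intro q
    rw [show (⟨ZFSet.pair (v 0).1 (v 1).1, _⟩ : SV θ).1 = {{(v 0).1}, {(v 0).1, (v 1).1}}
      from rfl, ZFSet.mem_pair, sing_iff, doub_iff]



abbrev CReal (D E R : ZFSet.{u}) {β : Type} {n : ℕ}
    (φ : LStd.BoundedFormula β n) (v : β → ↥D.toSet) (w : Fin n → ↥D.toSet) : Prop :=
  @BoundedFormula.Realize LStd ↥D.toSet (codedStructure D E R) β n φ v w

lemma crelMap_eps {D E R : ZFSet.{u}} (x : Fin 2 → ↥D.toSet) :
    @Structure.RelMap LStd ↥D.toSet (codedStructure D E R) 2 eps2 x ↔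
      ZFSet.pair (x 0).1 (x 1).1 ∈ E := Iff.rfl

lemma crelMap_r {D E R : ZFSet.{u}} (x : Fin 1 → ↥D.toSet) :
    @Structure.RelMap LStd ↥D.toSet (codedStructure D E R) 1 r1 x ↔ (x 0).1 ∈ R := Iff.rfl

lemma realize_equal' {M : Type*} [LStd.Structure M] {α : Type} {n : ℕ}
    {t₁ t₂ : LStd.Term (α ⊕ Fin n)} {v : α → M} {xs : Fin n → M} :
    (BoundedFormula.equal t₁ t₂).Realize v xs ↔
      t₁.realize (Sum.elim v xs) = t₂.realize (Sum.elim v xs) := Iff.rfl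

def tvar : ∀ {γ : Type*}, LStd.Term γ → γ
  | _, Term.var a => a
  | _, Term.func f _ => Empty.elim f

lemma realize_tvar {γ : Type*} {M : Type*} [LStd.Structure M] (v : γ → M) (t : LStd.Term γ) :
    t.realize v = v (tvar t) := by
  cases t with
  | var a => rfl
  | func f ts => exact Empty.elim f

lemma realize_formula_relabel {M : Type*} [LStd.Structure M] {β' : Type} {k : ℕ}
    (ψ : LStd.Formula (Fin 3)) (g : Fin 3 → (β' ⊕ Fin k))
    (v' : β' → M) (xs : Fin k → M) :
    (BoundedFormula.relabel g ψ).Realize v' xs ↔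
      ψ.Realize (fun i => Sum.elim v' xs (g i)) := by
  rw [BoundedFormula.realize_relabel]
  unfold Formula.Realize
  have h1 : (Sum.elim v' (xs ∘ Fin.castAdd 0) ∘ g) = fun i => Sum.elim v' xs (g i) := by
    funext i
    rcases hgi : g i with b | j
    · simp [hgi]
    · simp [hgi, Fin.ext_iff]

  have h2 : xs ∘ Fin.natAdd k = (default : Fin 0 → M) := Subsingleton.elim _ _
  rw [h1, h2]

def trF : ∀ {β : Type} {k : ℕ}, LStd.BoundedFormula β k → LStd.BoundedFormula (β ⊕ Fin 3) k
  | _, _, BoundedFormula.falsum => BoundedFormula.falsum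
  | _, _, BoundedFormula.equal t₁ t₂ =>
      BoundedFormula.equal (Term.var (Sum.map Sum.inl id (tvar t₁)))
        (Term.var (Sum.map Sum.inl id (tvar t₂)))
  | _, _, BoundedFormula.rel LStdRel.eps ts =>
      BoundedFormula.relabel
        ![Sum.map Sum.inl id (tvar (ts 0)), Sum.map Sum.inl id (tvar (ts 1)),
          Sum.inl (Sum.inr 1)] pairMemF
  | _, _, BoundedFormula.rel LStdRel.r ts =>
      BoundedFormula.rel eps2
        ![Term.var (Sum.map Sum.inl id (tvar (ts 0))), Term.var (Sum.inl (Sum.inr 2))]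
  | _, _, BoundedFormula.imp φ ψ => (trF φ).imp (trF ψ)
  | _, k, BoundedFormula.all φ =>
      ((BoundedFormula.rel eps2
          ![Term.var (Sum.inr (Fin.last k)), Term.var (Sum.inl (Sum.inr 0))]).imp
        (trF φ)).all

def embD {θ : Ordinal.{u}} {D : ZFSet.{u}} (hD : D.rank < θ) (x : ↥D.toSet) : SV θ :=
  ⟨x.1, ((ZFSet.rank_lt_of_mem ((ZFSet.mem_toSet _ _).1 x.2))).trans hD⟩

lemma embD_inj {θ : Ordinal.{u}} {D : ZFSet.{u}} (hD : D.rank < θ) {x y : ↥D.toSet} :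
    embD hD x = embD hD y ↔ x = y := by
  constructor
  · intro h
    have h2 : (embD hD x).1 = (embD hD y).1 := congrArg Subtype.val h
    exact Subtype.ext h2
  · intro h
    rw [h]

def dER {θ : Ordinal.{u}} {D E R : ZFSet.{u}} (hD : D.rank < θ) (hE : E.rank < θ)
    (hR : R.rank < θ) : Fin 3 → SV θ := ![⟨D, hD⟩, ⟨E, hE⟩, ⟨R, hR⟩]

lemma emb_snoc {θ : Ordinal.{u}} {D : ZFSet.{u}} (hD : D.rank < θ) {k : ℕ}
    (w : Fin k → ↥D.toSet) (x : ↥D.toSet) :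
    (fun i => embD hD (Fin.snoc (α := fun _ => ↥D.toSet) w x i)) =
      Fin.snoc (fun i => embD hD (w i)) (embD hD x) := by
  funext i
  refine Fin.lastCases ?_ ?_ i
  · simp [Fin.snoc_last]
  · intro j
    simp [Fin.snoc_castSucc]

lemma realize_trF {θ : Ordinal.{u}} {𝒜 : Set ZFSet.{u}} {D E R : ZFSet.{u}}
    (hD : D.rank < θ) (hE : E.rank < θ) (hR : R.rank < θ) :
    ∀ {β : Type} {k : ℕ} (φ : LStd.BoundedFormula β k) (v : β → ↥D.toSet)
      (w : Fin k → ↥D.toSet),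
    VReal θ 𝒜 (trF φ) (Sum.elim (fun b => embD hD (v b)) (dER hD hE hR))
        (fun i => embD hD (w i)) ↔
      CReal D E R φ v w := by
  intro β k φ
  letI : LStd.Structure (SV θ) := VStructure θ 𝒜
  letI : LStd.Structure ↥D.toSet := codedStructure D E R
  induction φ with
  | falsum =>
    intro v w
    simp only [trF]
    exact Iff.rfl
  | equal t₁ t₂ =>
    intro v w
    simp only [trF, VReal, CReal, realize_equal', realize_tvar]
    rcases tvar t₁ with b | i <;> rcases tvar t₂ with c | j <;>
      · simp only [Sum.map_inl, Sum.map_inr, Sum.elim_inl, Sum.elim_inr, id_eq]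
        exact embD_inj hD
  | rel R ts =>
    intro v w
    cases R with
    | eps =>
      simp only [trF]
      refine Iff.trans (realize_formula_relabel (M := SV θ) pairMemF
        ![Sum.map Sum.inl id (tvar (ts 0)), Sum.map Sum.inl id (tvar (ts 1)),
          Sum.inl (Sum.inr 1)]
        (Sum.elim (fun b => embD hD (v b)) (dER hD hE hR)) (fun i => embD hD (w i))) ?_
      have hval : ∀ t : LStd.Term (β ⊕ Fin _),
          Sum.elim (Sum.elim (fun b => embD hD (v b)) (dER hD hE hR))
            (fun i => embD hD (w i)) (Sum.map Sum.inl id (tvar t)) =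
          embD hD (Sum.elim v w (tvar t)) := by
        intro t
        rcases tvar t with b | i <;> rfl
      have hgv : (fun i => Sum.elim (Sum.elim (fun b => embD hD (v b)) (dER hD hE hR))
            (fun i => embD hD (w i))
            (![Sum.map Sum.inl id (tvar (ts 0)), Sum.map Sum.inl id (tvar (ts 1)),
              Sum.inl (Sum.inr 1)] i)) =
          ![embD hD (Sum.elim v w (tvar (ts 0))), embD hD (Sum.elim v w (tvar (ts 1))),
            ⟨E, hE⟩] := by
        funext i
        fin_cases i
        · exact hval (ts 0)
        · exact hval (ts 1)
        · rfl
      rw [hgv]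
      refine Iff.trans (realize_pairMemF _ ?_ ?_) ?_
      · show ZFSet.rank {(Sum.elim v w (tvar (ts 0))).1} < θ
        rw [ZFSet.rank_singleton]
        exact lt_of_le_of_lt (Order.succ_le_of_lt (ZFSet.rank_lt_of_mem
          ((ZFSet.mem_toSet _ _).1 (Sum.elim v w (tvar (ts 0))).2))) hD
      · show ZFSet.rank {(Sum.elim v w (tvar (ts 0))).1, (Sum.elim v w (tvar (ts 1))).1} < θ
        rw [ZFSet.rank_pair]
        refine lt_of_le_of_lt (max_le ?_ ?_) hD <;>
          exact Order.succ_le_of_lt (ZFSet.rank_lt_of_mem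
            ((ZFSet.mem_toSet _ _).1 (Sum.elim v w (tvar _)).2))
      · show ZFSet.pair (Sum.elim v w (tvar (ts 0))).1 (Sum.elim v w (tvar (ts 1))).1 ∈ E ↔ _
        rw [show CReal D E R (BoundedFormula.rel LStdRel.eps ts) v w ↔
          ZFSet.pair ((ts 0).realize (Sum.elim v w)).1 ((ts 1).realize (Sum.elim v w)).1 ∈ E
          from Iff.rfl]
        rw [realize_tvar, realize_tvar]
    | r =>
      simp only [trF]
      rw [show CReal D E R (BoundedFormula.rel LStdRel.r ts) v w ↔
        ((ts 0).realize (Sum.elim v w)).1 ∈ R from Iff.rfl]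
      rw [show VReal θ 𝒜 (BoundedFormula.rel eps2
          ![Term.var (Sum.map Sum.inl id (tvar (ts 0))), Term.var (Sum.inl (Sum.inr 2))])
          (Sum.elim (fun b => embD hD (v b)) (dER hD hE hR)) (fun i => embD hD (w i)) ↔
        (Sum.elim (Sum.elim (fun b => embD hD (v b)) (dER hD hE hR)) (fun i => embD hD (w i))
          (Sum.map Sum.inl id (tvar (ts 0)))).1 ∈ R from Iff.rfl]
      rw [realize_tvar]
      rcases tvar (ts 0) with b | i <;> exact Iff.rfl
  | imp φ ψ ihφ ihψ =>
    intro v w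
    simp only [trF]
    refine Iff.trans (BoundedFormula.realize_imp (φ := trF φ) (ψ := trF ψ)) (Iff.trans ?_
      (BoundedFormula.realize_imp (φ := φ) (ψ := ψ)).symm)
    rw [show (trF φ).Realize (Sum.elim (fun b => embD hD (v b)) (dER hD hE hR))
        (fun i => embD hD (w i)) ↔ CReal D E R φ v w from ihφ v w,
      show (trF ψ).Realize (Sum.elim (fun b => embD hD (v b)) (dER hD hE hR))
        (fun i => embD hD (w i)) ↔ CReal D E R ψ v w from ihψ v w]
  | all φ ih =>
    intro v w
    simp only [trF]
    refine Iff.trans (BoundedFormula.realize_all) (Iff.trans ?_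
      (BoundedFormula.realize_all).symm)
    constructor
    · intro H x
      have h1 := H (embD hD x)
      rw [BoundedFormula.realize_imp] at h1
      have h2 := h1 (by
        refine (realize_rel' (M := SV θ)).2 ?_
        refine (relMap_eps _).2 ?_
        show (Fin.snoc (α := fun _ => SV θ) (fun i => embD hD (w i)) (embD hD x) (Fin.last _)).1 ∈
          (Sum.elim (Sum.elim (fun b => embD hD (v b)) (dER hD hE hR))
            (Fin.snoc (α := fun _ => SV θ) (fun i => embD hD (w i)) (embD hD x)) (Sum.inl (Sum.inr 0))).1
        rw [Fin.snoc_last]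
        exact (ZFSet.mem_toSet _ _).1 x.2)
      rw [← emb_snoc hD w x] at h2
      exact (ih v (Fin.snoc w x)).1 h2
    · intro H a
      rw [BoundedFormula.realize_imp]
      intro ha
      have hmem : a.1 ∈ D := by
        have h3 := (relMap_eps _).1 ((realize_rel' (M := SV θ)).1 ha)
        revert h3
        show (Fin.snoc (α := fun _ => SV θ) (fun i => embD hD (w i)) a (Fin.last _)).1 ∈ _ → _
        rw [Fin.snoc_last]
        exact id
      have hax : a = embD hD ⟨a.1, (ZFSet.mem_toSet _ _).2 hmem⟩ := Subtype.ext rfl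
      rw [hax, ← emb_snoc hD w ⟨a.1, (ZFSet.mem_toSet _ _).2 hmem⟩]
      exact (ih v (Fin.snoc w ⟨a.1, (ZFSet.mem_toSet _ _).2 hmem⟩)).2
        (H ⟨a.1, (ZFSet.mem_toSet _ _).2 hmem⟩)

section JTransfer

variable {θ θ' : Ordinal.{u}} {𝒜 : Set ZFSet.{u}}

lemma j_mem :
    letI := VStructure θ 𝒜
    letI := VStructure θ' 𝒜
    ∀ (j : SV θ ↪ₑ[LStd] SV θ') (a b : SV θ), ((j a).1 ∈ (j b).1 ↔ a.1 ∈ b.1) := by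
  letI := VStructure θ 𝒜
  letI := VStructure θ' 𝒜
  intro j a b
  have h := j.map_formula memF ![a, b]
  rw [show (⇑j ∘ ![a, b]) = ![j a, j b] from by funext i; fin_cases i <;> rfl] at h
  exact Iff.trans (realize_memF (𝒜 := 𝒜) ![j a, j b]).symm
    (Iff.trans h (realize_memF (𝒜 := 𝒜) ![a, b]))

lemma j_pred :
    letI := VStructure θ 𝒜
    letI := VStructure θ' 𝒜
    ∀ (j : SV θ ↪ₑ[LStd] SV θ') (a : SV θ), ((j a).1 ∈ 𝒜 ↔ a.1 ∈ 𝒜) := by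
  letI := VStructure θ 𝒜
  letI := VStructure θ' 𝒜
  intro j a
  have h := j.map_formula rF ![a]
  rw [show (⇑j ∘ ![a]) = ![j a] from by funext i; fin_cases i <;> rfl] at h
  exact Iff.trans (realize_rF (𝒜 := 𝒜) ![j a]).symm
    (Iff.trans h (realize_rF (𝒜 := 𝒜) ![a]))

lemma j_sing :
    letI := VStructure θ 𝒜
    letI := VStructure θ' 𝒜
    ∀ (j : SV θ ↪ₑ[LStd] SV θ') (a s : SV θ), ((j s).1 = {(j a).1} ↔ s.1 = {a.1}) := by
  letI := VStructure θ 𝒜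
  letI := VStructure θ' 𝒜
  intro j a s
  have h := j.map_formula singF ![a, s]
  rw [show (⇑j ∘ ![a, s]) = ![j a, j s] from by funext i; fin_cases i <;> rfl] at h
  exact Iff.trans (realize_singF (𝒜 := 𝒜) ![j a, j s]).symm
    (Iff.trans h (realize_singF (𝒜 := 𝒜) ![a, s]))

lemma j_doub :
    letI := VStructure θ 𝒜
    letI := VStructure θ' 𝒜
    ∀ (j : SV θ ↪ₑ[LStd] SV θ') (a b s : SV θ),
      ((j s).1 = {(j a).1, (j b).1} ↔ s.1 = {a.1, b.1}) := by
  letI := VStructure θ 𝒜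
  letI := VStructure θ' 𝒜
  intro j a b s
  have h := j.map_formula doubF ![a, b, s]
  rw [show (⇑j ∘ ![a, b, s]) = ![j a, j b, j s] from by
    funext i; fin_cases i <;> rfl] at h
  exact Iff.trans (realize_doubF (𝒜 := 𝒜) ![j a, j b, j s]).symm
    (Iff.trans h (realize_doubF (𝒜 := 𝒜) ![a, b, s]))

lemma j_transitive :
    letI := VStructure θ 𝒜
    letI := VStructure θ' 𝒜
    ∀ (j : SV θ ↪ₑ[LStd] SV θ') (d : SV θ),
      (∀ y z : ZFSet.{u}, z ∈ y → y ∈ d.1 → z ∈ d.1) →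
      ∀ y z : ZFSet.{u}, z ∈ y → y ∈ (j d).1 → z ∈ (j d).1 := by
  letI := VStructure θ 𝒜
  letI := VStructure θ' 𝒜
  intro j d hd
  have h := j.map_formula transF ![d]
  rw [show (⇑j ∘ ![d]) = ![j d] from by funext i; fin_cases i <;> rfl] at h
  have h2 := (realize_transF (𝒜 := 𝒜) ![j d]).1
    (h.2 ((realize_transF (𝒜 := 𝒜) ![d]).2 (by
      intro y z hzy hy
      exact hd y z hzy hy)))
  intro y z hzy hy
  exact h2 y z hzy hy

lemma j_kpair :
    letI := VStructure θ 𝒜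
    letI := VStructure θ' 𝒜
    ∀ (j : SV θ ↪ₑ[LStd] SV θ') (a b p : SV θ),
      p.1 = ZFSet.pair a.1 b.1 → (j p).1 = ZFSet.pair (j a).1 (j b).1 := by
  letI := VStructure θ 𝒜
  letI := VStructure θ' 𝒜
  intro j a b p hp
  have hs1m : ({a.1} : ZFSet) ∈ p.1 := by
    rw [hp]; exact ZFSet.mem_pair.2 (Or.inl rfl)
  have hs2m : ({a.1, b.1} : ZFSet) ∈ p.1 := by
    rw [hp]; exact ZFSet.mem_pair.2 (Or.inr rfl)
  have h1 : (j ⟨{a.1}, (ZFSet.rank_lt_of_mem hs1m).trans p.2⟩).1 = {(j a).1} :=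
    (j_sing j a _).2 rfl
  have h2 : (j ⟨{a.1, b.1}, (ZFSet.rank_lt_of_mem hs2m).trans p.2⟩).1 =
      {(j a).1, (j b).1} := (j_doub j a b _).2 rfl
  have h3 : (j p).1 = {(j ⟨{a.1}, (ZFSet.rank_lt_of_mem hs1m).trans p.2⟩).1,
      (j ⟨{a.1, b.1}, (ZFSet.rank_lt_of_mem hs2m).trans p.2⟩).1} :=
    (j_doub j _ _ p).2 hp
  rw [h3, h1, h2]
  rfl

lemma coded_embedding :
    letI := VStructure θ 𝒜
    letI := VStructure θ' 𝒜
    ∀ (j : SV θ ↪ₑ[LStd] SV θ') {D E R : ZFSet.{u}}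
      (hD : D.rank < θ) (hE : E.rank < θ) (hR : R.rank < θ),
    letI := codedStructure D E R
    letI := codedStructure (j ⟨D, hD⟩).1 (j ⟨E, hE⟩).1 (j ⟨R, hR⟩).1
    Nonempty (↥D.toSet ↪ₑ[LStd] ↥((j ⟨D, hD⟩).1).toSet) := by
  letI := VStructure θ 𝒜
  letI := VStructure θ' 𝒜
  intro j D E R hD hE hR
  letI := codedStructure D E R
  letI := codedStructure (j ⟨D, hD⟩).1 (j ⟨E, hE⟩).1 (j ⟨R, hR⟩).1
  have hD' : ((j ⟨D, hD⟩).1).rank < θ' := (j ⟨D, hD⟩).2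
  have hE' : ((j ⟨E, hE⟩).1).rank < θ' := (j ⟨E, hE⟩).2
  have hR' : ((j ⟨R, hR⟩).1).rank < θ' := (j ⟨R, hR⟩).2
  have hk : ∀ x : ↥D.toSet, (j (embD hD x)).1 ∈ ((j ⟨D, hD⟩).1).toSet := by
    intro x
    refine (ZFSet.mem_toSet _ _).2 ?_
    exact (j_mem j (embD hD x) ⟨D, hD⟩).2 ((ZFSet.mem_toSet _ _).1 x.2)
  refine ⟨⟨fun x => ⟨(j (embD hD x)).1, hk x⟩, ?_⟩⟩
  intro n φ v
  refine Iff.trans ?_ (realize_trF (𝒜 := 𝒜) hD hE hR φ v default)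
  refine Iff.trans (realize_trF (𝒜 := 𝒜) hD' hE' hR' φ
    ((fun x => (⟨(j (embD hD x)).1, hk x⟩ : ↥((j ⟨D, hD⟩).1).toSet)) ∘ v)
    default).symm ?_
  have hx : Sum.elim (fun b => embD hD'
        (((fun x => (⟨(j (embD hD x)).1, hk x⟩ :
          ↥((j ⟨D, hD⟩).1).toSet)) ∘ v) b)) (dER hD' hE' hR') =
      (⇑j ∘ Sum.elim (fun b => embD hD (v b)) (dER hD hE hR)) := by
    funext i
    rcases i with b | i
    · exact Subtype.ext rfl
    · fin_cases i <;> exact Subtype.ext rfl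
  rw [hx]
  rw [Subsingleton.elim (fun i : Fin 0 => embD hD' ((default : Fin 0 → _) i))
    (default : Fin 0 → SV θ')]
  rw [Subsingleton.elim (fun i : Fin 0 => embD hD ((default : Fin 0 → _) i))
    (default : Fin 0 → SV θ)]
  exact j.map_formula (trF φ) (Sum.elim (fun b => embD hD (v b)) (dER hD hE hR))

end JTransfer

lemma rank_left_lt_kpair (x y : ZFSet.{u}) : x.rank < (ZFSet.pair x y).rank := by
  have h1 : ({x} : ZFSet) ∈ ZFSet.pair x y := ZFSet.mem_pair.2 (Or.inl rfl)
  have h2 : x ∈ ({x} : ZFSet) := ZFSet.mem_singleton.2 rfl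
  exact (ZFSet.rank_lt_of_mem h2).trans (ZFSet.rank_lt_of_mem h1)

lemma rank_right_lt_kpair (x y : ZFSet.{u}) : y.rank < (ZFSet.pair x y).rank := by
  have h1 : ({x, y} : ZFSet) ∈ ZFSet.pair x y := ZFSet.mem_pair.2 (Or.inr rfl)
  have h2 : y ∈ ({x, y} : ZFSet) := ZFSet.mem_pair.2 (Or.inr rfl)
  exact (ZFSet.rank_lt_of_mem h2).trans (ZFSet.rank_lt_of_mem h1)

lemma rank_kpair_lt {x y : ZFSet.{u}} {o : Ordinal.{u}} (ho : Order.IsSuccLimit o)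
    (hx : x.rank < o) (hy : y.rank < o) : (ZFSet.pair x y).rank < o := by
  have : ZFSet.pair x y = ({{x}, {x, y}} : ZFSet) := rfl
  rw [this, ZFSet.rank_pair, ZFSet.rank_singleton, ZFSet.rank_pair]
  refine max_lt (ho.succ_lt (ho.succ_lt hx)) (ho.succ_lt (max_lt (ho.succ_lt hx)
    (ho.succ_lt hy)))

end VopenkaAux


open VopenkaAux
/-- If `κ` is inaccessible and for every set `A ⊆ V_κ` there is a cardinal `α < κ` that is
extendible below `κ` for `A`, then `κ` is a Vopěnka cardinal. -/
theorem isVopenka_of_extendibleBelow (κ : Cardinal.{u}) (hκ : κ.IsInaccessible)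
    (h : ∀ A : ZFSet.{u}, (∀ x ∈ A, x.rank < κ.ord) →
      ∃ α : ZFSet.{u}, ZFIsCardinal α ∧ α.rank < κ.ord ∧ ExtendibleBelow κ A.toSet α) :
    IsVopenka κ := by
  classical
  refine ⟨hκ, ?_⟩
  intro A hAsub hAcard hAcode
  letI : ZFSet.Definable₁ (fun M : ZFSet.{u} => ZFSet.pair (vN M.rank) M) :=
    Classical.allZFSetDefinable _
  set B : ZFSet.{u} := ZFSet.image (fun M => ZFSet.pair (vN M.rank) M) A with hB
  have hord : Order.IsSuccLimit (κ.ord) := Cardinal.isSuccLimit_ord hκ.1.le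
  have hBsub : ∀ x ∈ B, x.rank < κ.ord := by
    intro x hx
    obtain ⟨M, hMA, rfl⟩ := ZFSet.mem_image.1 hx
    exact rank_kpair_lt hord (by rw [rank_vN]; exact hAsub M hMA) (hAsub M hMA)
  obtain ⟨α, hαcard, hαrank, hαext⟩ := h B hBsub
  have hαord : α.IsOrdinal := hαcard.1
  have hMex : ∃ M, M ∈ A ∧ α.rank ≤ M.rank := by
    by_contra hcon
    push_neg at hcon
    have hsub : A.toSet ⊆ {x : ZFSet.{u} | x.rank < α.rank} := by
      intro x hx
      exact hcon x ((ZFSet.mem_toSet _ _).1 hx)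
    have hle := Cardinal.mk_le_mk_of_subset hsub
    rw [hAcard] at hle
    exact absurd (hle.trans_lt (card_ball_lt hκ α.rank hαrank)) (lt_irrefl _)
  obtain ⟨M, hMA, hMrank⟩ := hMex
  have hMκ : M.rank < κ.ord := hAsub M hMA
  have hδrank : (vN M.rank).rank = M.rank := rank_vN _
  have htmem : ZFSet.pair (vN M.rank) M ∈ B := ZFSet.mem_image.2 ⟨M, hMA, rfl⟩
  have htκ : (ZFSet.pair (vN M.rank) M).rank < κ.ord :=
    rank_kpair_lt hord (by rw [hδrank]; exact hMκ) hMκ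
  set γ : Ordinal.{u} := max (ZFSet.pair (vN M.rank) M).rank α.rank + 1 with hγ
  have hγκ : γ < κ.ord := by
    rw [hγ, Ordinal.add_one_eq_succ]
    exact hord.succ_lt (max_lt htκ hαrank)
  have hαγ : α.rank < γ := by
    rw [hγ, Ordinal.add_one_eq_succ]
    exact (le_max_right _ _).trans_lt (Order.lt_succ _)
  have htγ : (ZFSet.pair (vN M.rank) M).rank < γ := by
    rw [hγ, Ordinal.add_one_eq_succ]
    exact (le_max_left _ _).trans_lt (Order.lt_succ _)
  have hMγ : M.rank < γ := (rank_right_lt_kpair _ _).trans htγ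
  have hδγ : (vN M.rank).rank < γ := by rw [hδrank]; exact hMγ
  have hηord : (vN γ).IsOrdinal := vN_isOrdinal γ
  have hηrank : (vN γ).rank = γ := rank_vN γ
  have hαη : α ∈ vN γ := by
    rw [isOrdinal_eq_vN hαord]
    exact vN_mem_vN hαγ
  obtain ⟨ζ, hζord, hζκ, jex⟩ := hαext (vN γ) hηord hαη (by rw [hηrank]; exact hγκ)
  obtain ⟨j, hfix, hmove⟩ := jex
  have hαlt : α.rank < (vN γ).rank := by rw [hηrank]; exact hαγ
  obtain ⟨hjα_ne, hjα_big⟩ := hmove hαlt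
  have hMθ : M.rank < (vN γ).rank := by rw [hηrank]; exact hMγ
  have hδθ : (vN M.rank).rank < (vN γ).rank := by rw [hηrank]; exact hδγ
  have htθ : (ZFSet.pair (vN M.rank) M).rank < (vN γ).rank := by rw [hηrank]; exact htγ
  have hjt_pair : (j ⟨ZFSet.pair (vN M.rank) M, htθ⟩).1 =
      ZFSet.pair (j ⟨vN M.rank, hδθ⟩).1 (j ⟨M, hMθ⟩).1 :=
    j_kpair j ⟨vN M.rank, hδθ⟩ ⟨M, hMθ⟩ ⟨ZFSet.pair (vN M.rank) M, htθ⟩ rfl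
  have hjt_B : (j ⟨ZFSet.pair (vN M.rank) M, htθ⟩).1 ∈ B := by
    have := (j_pred j ⟨ZFSet.pair (vN M.rank) M, htθ⟩).2
      ((ZFSet.mem_toSet _ _).2 htmem)
    exact (ZFSet.mem_toSet _ _).1 this
  rw [hjt_pair] at hjt_B
  obtain ⟨M', hM'A, hM'tag⟩ := ZFSet.mem_image.1 hjt_B
  obtain ⟨htag1, htag2⟩ := ZFSet.pair_injective hM'tag
  have hNA : (j ⟨M, hMθ⟩).1 ∈ A := htag2 ▸ hM'A
  have hδtag : vN ((j ⟨M, hMθ⟩).1).rank = (j ⟨vN M.rank, hδθ⟩).1 := by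
    rw [← htag2]; exact htag1
  have hjδ_ne : (j ⟨vN M.rank, hδθ⟩).1 ≠ vN M.rank := by
    rcases eq_or_lt_of_le hMrank with heq | hlt
    · have hαδ : α = vN M.rank := by
        rw [isOrdinal_eq_vN hαord, heq]
      have haa : (⟨vN M.rank, hδθ⟩ : {x : ZFSet.{u} // x.rank < (vN γ).rank}) = ⟨α, hαlt⟩ :=
        Subtype.ext hαδ.symm
      rw [haa, ← hαδ]
      exact hjα_ne
    · intro hEq
      have hαδmem : α ∈ vN M.rank := by
        have : α = vN α.rank := isOrdinal_eq_vN hαord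
        rw [this]
        exact vN_mem_vN hlt
      have hjαjδ : (j ⟨α, hαlt⟩).1 ∈ (j ⟨vN M.rank, hδθ⟩).1 :=
        (j_mem j ⟨α, hαlt⟩ ⟨vN M.rank, hδθ⟩).2 hαδmem
      have hηjδ : vN γ ∈ (j ⟨vN M.rank, hδθ⟩).1 := by
        refine j_transitive j ⟨vN M.rank, hδθ⟩ ?_ (j ⟨α, hαlt⟩).1 (vN γ) hjα_big hjαjδ
        intro y z hzy hy
        exact (vN_isOrdinal M.rank).mem_trans hzy hy
      rw [hEq] at hηjδ
      have hlt2 : (vN γ).rank < (vN M.rank).rank := ZFSet.rank_lt_of_mem hηjδ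
      rw [hηrank, hδrank] at hlt2
      exact absurd (hMγ.trans hlt2) (lt_irrefl _)
  have hMN : M ≠ (j ⟨M, hMθ⟩).1 := by
    intro hEq
    apply hjδ_ne
    rw [← hδtag, ← hEq]
  obtain ⟨D, Ee, Rr, hMdec, _, _⟩ := hAcode M hMA
  have hPrank : (ZFSet.pair Ee Rr).rank < M.rank := by
    conv_rhs => rw [hMdec]
    exact rank_right_lt_kpair _ _
  have hDrank : D.rank < M.rank := by
    conv_rhs => rw [hMdec]
    exact rank_left_lt_kpair _ _
  have hDθ : D.rank < (vN γ).rank := hDrank.trans hMθ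
  have hEθ : Ee.rank < (vN γ).rank := ((rank_left_lt_kpair Ee Rr).trans hPrank).trans hMθ
  have hRθ : Rr.rank < (vN γ).rank := ((rank_right_lt_kpair Ee Rr).trans hPrank).trans hMθ
  have hPθ : (ZFSet.pair Ee Rr).rank < (vN γ).rank := hPrank.trans hMθ
  have hjM : (j ⟨M, hMθ⟩).1 =
      ZFSet.pair (j ⟨D, hDθ⟩).1 (j ⟨ZFSet.pair Ee Rr, hPθ⟩).1 :=
    j_kpair j ⟨D, hDθ⟩ ⟨ZFSet.pair Ee Rr, hPθ⟩ ⟨M, hMθ⟩ hMdec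
  have hjP : (j ⟨ZFSet.pair Ee Rr, hPθ⟩).1 =
      ZFSet.pair (j ⟨Ee, hEθ⟩).1 (j ⟨Rr, hRθ⟩).1 :=
    j_kpair j ⟨Ee, hEθ⟩ ⟨Rr, hRθ⟩ ⟨ZFSet.pair Ee Rr, hPθ⟩ rfl
  refine ⟨M, hMA, (j ⟨M, hMθ⟩).1, hNA, hMN, D, Ee, Rr,
    (j ⟨D, hDθ⟩).1, (j ⟨Ee, hEθ⟩).1, (j ⟨Rr, hRθ⟩).1, hMdec, ?_, ?_⟩
  · rw [hjM, hjP]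
  · exact coded_embedding j hDθ hEθ hRθ
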